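/- Transitivity of quasi-unitary equivalence with explicit error: if R₁ and R₂ are δ₁₂-quasi-unitarily equivalent and R₂ and R₃ are δ₂₃-quasi-unitarily equivalent, then R₁ and R₃ are Φ(δ₁₂,δ₂₃)-quasi-unitarily equivalent, where Φ(a,b) = 3(a+b) + (a+b)² + 2ab + (a+b)³ + a²b², using the identification operators J₁₃ = J₂₃J₁₂ and J₃₁ = J₂₁J₃₂. -/

import Mathlib

/-- `R` and `R'` are `δ`-quasi-unitarily equivalent via the identification
operators `J : H → H'` and `J' : H' → H`. -/
def IsQuasiUnitaryEquiv
    {H H' : Type*}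
    [NormedAddCommGroup H] [InnerProductSpace ℂ H] [CompleteSpace H]
    [NormedAddCommGroup H'] [InnerProductSpace ℂ H'] [CompleteSpace H']
    (δ : ℝ) (R : H →L[ℂ] H) (R' : H' →L[ℂ] H')
    (J : H →L[ℂ] H') (J' : H' →L[ℂ] H) : Prop :=
  ‖J‖ ≤ 1 + δ ∧ ‖J'‖ ≤ 1 + δ ∧
  ‖J' - ContinuousLinearMap.adjoint J‖ ≤ δ ∧
  ‖(1 - J'.comp J).comp R‖ ≤ δ ∧
  ‖(1 - J.comp J').comp R'‖ ≤ δ ∧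
  ‖J.comp R - R'.comp J‖ ≤ δ ∧
  ‖J'.comp R' - R.comp J'‖ ≤ δ

/-- The triangle function `Φ(a,b)`. -/
def Phi (a b : ℝ) : ℝ := 3 * (a + b) + (a + b) ^ 2 + 2 * a * b + (a + b) ^ 3 + a ^ 2 * b ^ 2

lemma aux_real_sq_bound (t u w X : ℝ) (hw : w ^ 2 ≤ t ^ 2 * u ^ 2) (hu : u ^ 2 ≤ t ^ 2 * X ^ 2) :
    X ^ 2 - 2 * u ^ 2 + w ^ 2 ≤ (max 1 (t ^ 2 - 1)) ^ 2 * X ^ 2 := by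
  rcases le_or_gt (t ^ 2) 2 with h | h
  · have hm : (1:ℝ) ≤ max 1 (t ^ 2 - 1) := le_max_left _ _
    have h1m : (1:ℝ) ≤ (max 1 (t ^ 2 - 1)) ^ 2 := one_le_pow₀ hm
    have : X ^ 2 ≤ (max 1 (t ^ 2 - 1)) ^ 2 * X ^ 2 := le_mul_of_one_le_left (sq_nonneg _) h1m
    nlinarith [sq_nonneg u]
  · have hm : t ^ 2 - 1 ≤ max 1 (t ^ 2 - 1) := le_max_right _ _
    have hc : (0:ℝ) ≤ (t ^ 2 - 2) * (t ^ 2 * X ^ 2 - u ^ 2) :=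
      mul_nonneg (by linarith) (by linarith)
    have hmm : (t ^ 2 - 1) ^ 2 ≤ (max 1 (t ^ 2 - 1)) ^ 2 := pow_le_pow_left₀ (by linarith) hm 2
    have hX2 : (t ^ 2 - 1) ^ 2 * X ^ 2 ≤ (max 1 (t ^ 2 - 1)) ^ 2 * X ^ 2 :=
      mul_le_mul_of_nonneg_right hmm (sq_nonneg _)
    nlinarith

open ContinuousLinearMap in
lemma aux_one_sub_adjoint_comp_self {E F : Type*}
    [NormedAddCommGroup E] [InnerProductSpace ℂ E] [CompleteSpace E]
    [NormedAddCommGroup F] [InnerProductSpace ℂ F] [CompleteSpace F]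
    (T : E →L[ℂ] F) :
    ‖(1 : E →L[ℂ] E) - (ContinuousLinearMap.adjoint T).comp T‖ ≤ max 1 (‖T‖ ^ 2 - 1) := by
  have hmax : (0:ℝ) ≤ max 1 (‖T‖ ^ 2 - 1) := le_trans zero_le_one (le_max_left _ _)
  apply opNorm_le_bound _ hmax
  intro x
  have h1 : ((1 : E →L[ℂ] E) - (ContinuousLinearMap.adjoint T).comp T) x
      = x - (ContinuousLinearMap.adjoint T) (T x) := by
    simp [ContinuousLinearMap.sub_apply]
  rw [h1]
  have hre : RCLike.re (inner ℂ x ((ContinuousLinearMap.adjoint T) (T x)) : ℂ) = ‖T x‖ ^ 2 := by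
    rw [ContinuousLinearMap.adjoint_inner_right, inner_self_eq_norm_sq (𝕜 := ℂ)]
  have hsq : ‖x - (ContinuousLinearMap.adjoint T) (T x)‖ ^ 2
      = ‖x‖ ^ 2 - 2 * ‖T x‖ ^ 2 + ‖(ContinuousLinearMap.adjoint T) (T x)‖ ^ 2 := by
    rw [@norm_sub_sq ℂ, hre]
  have hAn : ‖(ContinuousLinearMap.adjoint T) (T x)‖ ≤ ‖T‖ * ‖T x‖ := by
    have h := (ContinuousLinearMap.adjoint T).le_opNorm (T x)
    have hA : ‖ContinuousLinearMap.adjoint T‖ = ‖T‖ := ContinuousLinearMap.adjoint.norm_map T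
    rwa [hA] at h
  have hTx : ‖T x‖ ≤ ‖T‖ * ‖x‖ := T.le_opNorm x
  have hA2 : ‖(ContinuousLinearMap.adjoint T) (T x)‖ ^ 2 ≤ ‖T‖ ^ 2 * ‖T x‖ ^ 2 := by
    nlinarith [norm_nonneg ((ContinuousLinearMap.adjoint T) (T x)),
      mul_nonneg (norm_nonneg T) (norm_nonneg (T x))]
  have hu2 : ‖T x‖ ^ 2 ≤ ‖T‖ ^ 2 * ‖x‖ ^ 2 := by
    nlinarith [norm_nonneg (T x), mul_nonneg (norm_nonneg T) (norm_nonneg x)]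
  have hkey := aux_real_sq_bound ‖T‖ ‖T x‖ ‖(ContinuousLinearMap.adjoint T) (T x)‖ ‖x‖ hA2 hu2
  rw [← hsq] at hkey
  have hkey' : ‖x - (ContinuousLinearMap.adjoint T) (T x)‖ ^ 2
      ≤ ((max 1 (‖T‖ ^ 2 - 1)) * ‖x‖) ^ 2 := by rw [mul_pow]; exact hkey
  exact le_of_pow_le_pow_left₀ two_ne_zero (mul_nonneg hmax (norm_nonneg x)) hkey'

open ContinuousLinearMap in
lemma aux_one_sub_self_comp_adjoint {E F : Type*}
    [NormedAddCommGroup E] [InnerProductSpace ℂ E] [CompleteSpace E]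
    [NormedAddCommGroup F] [InnerProductSpace ℂ F] [CompleteSpace F]
    (T : E →L[ℂ] F) :
    ‖(1 : F →L[ℂ] F) - T.comp (ContinuousLinearMap.adjoint T)‖ ≤ max 1 (‖T‖ ^ 2 - 1) := by
  have h := aux_one_sub_adjoint_comp_self (ContinuousLinearMap.adjoint T)
  rw [ContinuousLinearMap.adjoint_adjoint] at h
  rwa [ContinuousLinearMap.adjoint.norm_map] at h

open ContinuousLinearMap in
lemma aux_norm_comp_le {E F G : Type*}
    [NormedAddCommGroup E] [NormedSpace ℂ E]
    [NormedAddCommGroup F] [NormedSpace ℂ F]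
    [NormedAddCommGroup G] [NormedSpace ℂ G]
    {A : F →L[ℂ] G} {B : E →L[ℂ] F} {α β : ℝ}
    (hA : ‖A‖ ≤ α) (hB : ‖B‖ ≤ β) : ‖A.comp B‖ ≤ α * β :=
  (opNorm_comp_le A B).trans
    (mul_le_mul hA hB (norm_nonneg _) ((norm_nonneg A).trans hA))

set_option maxHeartbeats 2000000 in
theorem quasi_unitary_transitive
    {H1 H2 H3 : Type*}
    [NormedAddCommGroup H1] [InnerProductSpace ℂ H1] [CompleteSpace H1]
    [NormedAddCommGroup H2] [InnerProductSpace ℂ H2] [CompleteSpace H2]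
    [NormedAddCommGroup H3] [InnerProductSpace ℂ H3] [CompleteSpace H3]
    (R1 : H1 →L[ℂ] H1) (R2 : H2 →L[ℂ] H2) (R3 : H3 →L[ℂ] H3)
    (hsa1 : IsSelfAdjoint R1) (hsa2 : IsSelfAdjoint R2) (hsa3 : IsSelfAdjoint R3)
    (hs1 : spectrum ℝ R1 ⊆ Set.Icc (0:ℝ) 1) (hs2 : spectrum ℝ R2 ⊆ Set.Icc (0:ℝ) 1)
    (hs3 : spectrum ℝ R3 ⊆ Set.Icc (0:ℝ) 1)
    (δ12 δ23 : ℝ) (hδ12 : 0 ≤ δ12) (hδ23 : 0 ≤ δ23)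
    (J12 : H1 →L[ℂ] H2) (J21 : H2 →L[ℂ] H1)
    (J23 : H2 →L[ℂ] H3) (J32 : H3 →L[ℂ] H2)
    (h12 : IsQuasiUnitaryEquiv δ12 R1 R2 J12 J21)
    (h23 : IsQuasiUnitaryEquiv δ23 R2 R3 J23 J32) :
    IsQuasiUnitaryEquiv (Phi δ12 δ23) R1 R3 (J23.comp J12) (J21.comp J32) := by
  obtain ⟨ha1, ha2, ha3, ha4, ha5, ha6, ha7⟩ := h12
  obtain ⟨hb1, hb2, hb3, hb4, hb5, hb6, hb7⟩ := h23
  have hPhi : Phi δ12 δ23 = 3 * (δ12 + δ23) + (δ12 + δ23) ^ 2 + 2 * δ12 * δ23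
      + (δ12 + δ23) ^ 3 + δ12 ^ 2 * δ23 ^ 2 := rfl
  have hab : 0 ≤ δ12 * δ23 := mul_nonneg hδ12 hδ23
  have ha12 : ‖ContinuousLinearMap.adjoint J12‖ ≤ 1 + δ12 := by
    rwa [ContinuousLinearMap.adjoint.norm_map]
  have ha23 : ‖ContinuousLinearMap.adjoint J23‖ ≤ 1 + δ23 := by
    rwa [ContinuousLinearMap.adjoint.norm_map]
  -- bound on ‖1 - J32 ∘ J23‖
  have hS23 : ‖(1 : H2 →L[ℂ] H2) - J32.comp J23‖
      ≤ max 1 ((1 + δ23) ^ 2 - 1) + δ23 * (1 + δ23) := by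
    have hid : (1 : H2 →L[ℂ] H2) - J32.comp J23
        = ((1 : H2 →L[ℂ] H2) - (ContinuousLinearMap.adjoint J23).comp J23)
          - (J32 - ContinuousLinearMap.adjoint J23).comp J23 := by
      ext x
      simp only [ContinuousLinearMap.comp_apply, ContinuousLinearMap.sub_apply,
        ContinuousLinearMap.one_apply, map_sub]
      abel
    rw [hid]
    refine (norm_sub_le _ _).trans (add_le_add ?_ (aux_norm_comp_le hb3 hb1))
    refine (aux_one_sub_adjoint_comp_self J23).trans (max_le_max le_rfl ?_)
    have : ‖J23‖ ^ 2 ≤ (1 + δ23) ^ 2 := pow_le_pow_left₀ (norm_nonneg _) hb1 2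
    linarith
  -- bound on ‖1 - J12 ∘ J21‖
  have hS12 : ‖(1 : H2 →L[ℂ] H2) - J12.comp J21‖
      ≤ max 1 ((1 + δ12) ^ 2 - 1) + (1 + δ12) * δ12 := by
    have hid : (1 : H2 →L[ℂ] H2) - J12.comp J21
        = ((1 : H2 →L[ℂ] H2) - J12.comp (ContinuousLinearMap.adjoint J12))
          - J12.comp (J21 - ContinuousLinearMap.adjoint J12) := by
      ext x
      simp only [ContinuousLinearMap.comp_apply, ContinuousLinearMap.sub_apply,
        ContinuousLinearMap.one_apply, map_sub]
      abel
    rw [hid]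
    refine (norm_sub_le _ _).trans (add_le_add ?_ (aux_norm_comp_le ha1 ha3))
    refine (aux_one_sub_self_comp_adjoint J12).trans (max_le_max le_rfl ?_)
    have : ‖J12‖ ^ 2 ≤ (1 + δ12) ^ 2 := pow_le_pow_left₀ (norm_nonneg _) ha1 2
    linarith
  refine ⟨?_, ?_, ?_, ?_, ?_, ?_, ?_⟩
  -- (1) ‖J23 ∘ J12‖
  · refine (aux_norm_comp_le hb1 ha1).trans ?_
    rw [hPhi]; nlinarith
  -- (2) ‖J21 ∘ J32‖
  · refine (aux_norm_comp_le ha2 hb2).trans ?_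
    rw [hPhi]; nlinarith
  -- (3) adjoint
  · have hid : J21.comp J32 - ContinuousLinearMap.adjoint (J23.comp J12)
        = (J21 - ContinuousLinearMap.adjoint J12).comp J32
          + (ContinuousLinearMap.adjoint J12).comp (J32 - ContinuousLinearMap.adjoint J23) := by
      rw [ContinuousLinearMap.adjoint_comp]
      ext x
      simp only [ContinuousLinearMap.comp_apply, ContinuousLinearMap.sub_apply,
        ContinuousLinearMap.add_apply, map_sub]
      abel
    rw [hid]
    refine (norm_add_le _ _).trans ?_
    refine (add_le_add (aux_norm_comp_le ha3 hb2) (aux_norm_comp_le ha12 hb3)).trans ?_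
    rw [hPhi]; nlinarith
  -- (4) ‖(1 - J31 ∘ J13) ∘ R1‖
  · have hid : (1 - (J21.comp J32).comp (J23.comp J12)).comp R1
        = (1 - J21.comp J12).comp R1
          + J21.comp ((((1 : H2 →L[ℂ] H2) - J32.comp J23).comp R2).comp J12)
          + (J21.comp ((1 : H2 →L[ℂ] H2) - J32.comp J23)).comp (J12.comp R1 - R2.comp J12) := by
      ext x
      simp only [ContinuousLinearMap.comp_apply, ContinuousLinearMap.sub_apply,
        ContinuousLinearMap.add_apply, ContinuousLinearMap.one_apply, map_sub]
      abel
    rw [hid]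
    refine (norm_add₃_le).trans ?_
    have t1 : ‖(1 - J21.comp J12).comp R1‖ ≤ δ12 := ha4
    have t2 : ‖J21.comp ((((1 : H2 →L[ℂ] H2) - J32.comp J23).comp R2).comp J12)‖
        ≤ (1 + δ12) * (δ23 * (1 + δ12)) :=
      aux_norm_comp_le ha2 (aux_norm_comp_le hb4 ha1)
    rcases le_or_gt (2 * δ23 + δ23 ^ 2) 1 with hc | hc
    · have hSle : ‖(1 : H2 →L[ℂ] H2) - J32.comp J23‖ ≤ 1 + δ23 * (1 + δ23) := by
        refine hS23.trans (add_le_add_left ?_ _)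
        exact max_le le_rfl (by nlinarith)
      have t3 : ‖(J21.comp ((1 : H2 →L[ℂ] H2) - J32.comp J23)).comp (J12.comp R1 - R2.comp J12)‖
          ≤ ((1 + δ12) * (1 + δ23 * (1 + δ23))) * δ12 :=
        aux_norm_comp_le (aux_norm_comp_le ha2 hSle) ha6
      rw [hPhi]; nlinarith [mul_nonneg hab hab, mul_nonneg hab hδ23, mul_nonneg hab hδ12,
        mul_nonneg (mul_nonneg hδ12 hδ12) hδ12, mul_nonneg (mul_nonneg hδ23 hδ23) hδ23]
    · have hSle : ‖(1 : H2 →L[ℂ] H2) - J32.comp J23‖ ≤ 1 + (1 + δ23) * (1 + δ23) := by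
        refine (norm_sub_le _ _).trans (add_le_add ?_ (aux_norm_comp_le hb2 hb1))
        exact ContinuousLinearMap.norm_id_le
      have t3 : ‖(J21.comp ((1 : H2 →L[ℂ] H2) - J32.comp J23)).comp (J12.comp R1 - R2.comp J12)‖
          ≤ ((1 + δ12) * (1 + (1 + δ23) * (1 + δ23))) * δ12 :=
        aux_norm_comp_le (aux_norm_comp_le ha2 hSle) ha6
      rw [hPhi]
      nlinarith [mul_nonneg (sq_nonneg (3 * δ12 - 2)) (show (0:ℝ) ≤ 3 * δ12 + 1 by linarith),
        mul_nonneg hδ12 (sq_nonneg δ23), mul_nonneg (mul_nonneg hδ23 hδ23) hδ23,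
        mul_nonneg hab hab, mul_nonneg hδ23 (sq_nonneg δ12)]
  -- (5) ‖(1 - J13 ∘ J31) ∘ R3‖
  · have hid : (1 - (J23.comp J12).comp (J21.comp J32)).comp R3
        = (1 - J23.comp J32).comp R3
          + J23.comp ((((1 : H2 →L[ℂ] H2) - J12.comp J21).comp R2).comp J32)
          + (J23.comp ((1 : H2 →L[ℂ] H2) - J12.comp J21)).comp (J32.comp R3 - R2.comp J32) := by
      ext x
      simp only [ContinuousLinearMap.comp_apply, ContinuousLinearMap.sub_apply,
        ContinuousLinearMap.add_apply, ContinuousLinearMap.one_apply, map_sub]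
      abel
    rw [hid]
    refine (norm_add₃_le).trans ?_
    have t1 : ‖(1 - J23.comp J32).comp R3‖ ≤ δ23 := hb5
    have t2 : ‖J23.comp ((((1 : H2 →L[ℂ] H2) - J12.comp J21).comp R2).comp J32)‖
        ≤ (1 + δ23) * (δ12 * (1 + δ23)) :=
      aux_norm_comp_le hb1 (aux_norm_comp_le ha5 hb2)
    rcases le_or_gt (2 * δ12 + δ12 ^ 2) 1 with hc | hc
    · have hSle : ‖(1 : H2 →L[ℂ] H2) - J12.comp J21‖ ≤ 1 + (1 + δ12) * δ12 := by
        refine hS12.trans (add_le_add_left ?_ _)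
        exact max_le le_rfl (by nlinarith)
      have t3 : ‖(J23.comp ((1 : H2 →L[ℂ] H2) - J12.comp J21)).comp (J32.comp R3 - R2.comp J32)‖
          ≤ ((1 + δ23) * (1 + (1 + δ12) * δ12)) * δ23 :=
        aux_norm_comp_le (aux_norm_comp_le hb1 hSle) hb7
      rw [hPhi]; nlinarith [mul_nonneg hab hab, mul_nonneg hab hδ23, mul_nonneg hab hδ12,
        mul_nonneg (mul_nonneg hδ12 hδ12) hδ12, mul_nonneg (mul_nonneg hδ23 hδ23) hδ23]
    · have hSle : ‖(1 : H2 →L[ℂ] H2) - J12.comp J21‖ ≤ 1 + (1 + δ12) * (1 + δ12) := by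
        refine (norm_sub_le _ _).trans (add_le_add ?_ (aux_norm_comp_le ha1 ha2))
        exact ContinuousLinearMap.norm_id_le
      have t3 : ‖(J23.comp ((1 : H2 →L[ℂ] H2) - J12.comp J21)).comp (J32.comp R3 - R2.comp J32)‖
          ≤ ((1 + δ23) * (1 + (1 + δ12) * (1 + δ12))) * δ23 :=
        aux_norm_comp_le (aux_norm_comp_le hb1 hSle) hb7
      rw [hPhi]
      nlinarith [mul_nonneg (sq_nonneg (3 * δ23 - 2)) (show (0:ℝ) ≤ 3 * δ23 + 1 by linarith),
        mul_nonneg hδ23 (sq_nonneg δ12), mul_nonneg (mul_nonneg hδ12 hδ12) hδ12,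
        mul_nonneg hab hab, mul_nonneg hδ12 (sq_nonneg δ23)]
  -- (6)
  · have hid : (J23.comp J12).comp R1 - R3.comp (J23.comp J12)
        = J23.comp (J12.comp R1 - R2.comp J12) + (J23.comp R2 - R3.comp J23).comp J12 := by
      ext x
      simp only [ContinuousLinearMap.comp_apply, ContinuousLinearMap.sub_apply,
        ContinuousLinearMap.add_apply, map_sub]
      abel
    rw [hid]
    refine (norm_add_le _ _).trans ?_
    refine (add_le_add (aux_norm_comp_le hb1 ha6) (aux_norm_comp_le hb6 ha1)).trans ?_
    rw [hPhi]; nlinarith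
  -- (7)
  · have hid : (J21.comp J32).comp R3 - R1.comp (J21.comp J32)
        = J21.comp (J32.comp R3 - R2.comp J32) + (J21.comp R2 - R1.comp J21).comp J32 := by
      ext x
      simp only [ContinuousLinearMap.comp_apply, ContinuousLinearMap.sub_apply,
        ContinuousLinearMap.add_apply, map_sub]
      abel
    rw [hid]
    refine (norm_add_le _ _).trans ?_
    refine (add_le_add (aux_norm_comp_le ha2 hb7) (aux_norm_comp_le ha7 hb2)).trans ?_
    rw [hPhi]; nlinarith
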